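/- Let G = <a, t | a^n = 1, a*t = t*a^r, t^2 = a^e> be a finite group of order 2n presented with parameter r in [1,n], where e in {0, n/2, m} corresponds to the types of groups with a cyclic index-2 subgroup. Then the commutator subgroup [G,G] equals the cyclic subgroup generated by a^{r-1}, and it has order n / gcd(r-1, n). -/

import Mathlib

open scoped commutatorElement


/-- For a finite group `G = ⟨a, t⟩` of order `2n` with `a` of order `n`,
`a * t = t * a ^ r` and `t ^ 2 = a ^ e` where `e ∈ {0, n/2, m}` (with `n = 2 ^ s * m`,
`m` odd), the commutator subgroup equals `⟨a ^ (r - 1)⟩` and has order `n / gcd (r-1, n)`. -/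
theorem commutator_of_cyclic_index_two {G : Type*} [Group G] [Finite G]
    (a t : G) (n r e s m : ℕ)
    (hgen : Subgroup.closure {a, t} = ⊤)
    (horder : orderOf a = n) (hcard : Nat.card G = 2 * n)
    (hnm : n = 2 ^ s * m) (hm : Odd m)
    (hr1 : 1 ≤ r) (hrn : r ≤ n) (hr2 : r ^ 2 ≡ 1 [MOD n])
    (hat : a * t = t * a ^ r)
    (ht : t ^ 2 = a ^ e) (he : e = 0 ∨ n = 2 * e ∨ e = m) :
    commutator G = Subgroup.zpowers (a ^ (r - 1)) ∧
      Nat.card (commutator G) = n / Nat.gcd (r - 1) n := by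
  obtain ⟨k, hk⟩ : ∃ k, r = k + 1 := ⟨r - 1, by omega⟩
  subst hk
  simp only [Nat.add_sub_cancel] at *
  -- conjugation by t⁻¹ sends a to a ^ r
  have hconj : t⁻¹ * a * t = a ^ (k + 1) := by
    rw [mul_assoc, hat, ← mul_assoc, inv_mul_cancel, one_mul]
  -- n divides r ^ 2 - 1 = k * k + 2 * k
  have hdvd : n ∣ k * k + 2 * k := by
    have h1 : n ∣ (k + 1) ^ 2 - 1 :=
      (Nat.modEq_iff_dvd' (Nat.one_le_pow 2 (k + 1) (Nat.succ_pos k))).mp hr2.symm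
    have h2 : (k + 1) ^ 2 - 1 = k * k + 2 * k := by
      have : (k + 1) ^ 2 = k * k + 2 * k + 1 := by ring
      omega
    rwa [h2] at h1
  -- conjugation by t also sends a to a ^ r
  have hconj2 : t * a * t⁻¹ = a ^ (k + 1) := by
    have e1 : t⁻¹ * a ^ (k + 1) * t = a ^ ((k + 1) * (k + 1)) := by
      calc t⁻¹ * a ^ (k + 1) * t = (t⁻¹ * a * t⁻¹⁻¹) ^ (k + 1) := by
            rw [conj_pow, inv_inv]
        _ = a ^ ((k + 1) * (k + 1)) := by rw [inv_inv, hconj, ← pow_mul]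
    have e2 : a ^ ((k + 1) * (k + 1)) = a ^ 1 := by
      rw [pow_eq_pow_iff_modEq, horder]
      simpa [pow_two] using hr2
    rw [e2, pow_one] at e1
    calc t * a * t⁻¹ = t * (t⁻¹ * a ^ (k + 1) * t) * t⁻¹ := by rw [e1]
      _ = a ^ (k + 1) := by group
  -- key conjugation identities for a ^ k
  have hkey : t * a ^ k * t⁻¹ = (a ^ k)⁻¹ := by
    have e1 : t * a ^ k * t⁻¹ = a ^ ((k + 1) * k) := by
      calc t * a ^ k * t⁻¹ = (t * a * t⁻¹) ^ k := conj_pow.symm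
        _ = a ^ ((k + 1) * k) := by rw [hconj2, ← pow_mul]
    have e2 : a ^ ((k + 1) * k) * a ^ k = 1 := by
      rw [← pow_add]
      apply orderOf_dvd_iff_pow_eq_one.mp
      rw [horder]
      have : (k + 1) * k + k = k * k + 2 * k := by ring
      rw [this]; exact hdvd
    rw [e1]
    exact eq_inv_of_mul_eq_one_left e2
  have hkey' : t⁻¹ * a ^ k * t = (a ^ k)⁻¹ := by
    have e1 : t⁻¹ * a ^ k * t = a ^ ((k + 1) * k) := by
      calc t⁻¹ * a ^ k * t = (t⁻¹ * a * t⁻¹⁻¹) ^ k := by rw [conj_pow, inv_inv]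
        _ = a ^ ((k + 1) * k) := by rw [inv_inv, hconj, ← pow_mul]
    have e2 : a ^ ((k + 1) * k) * a ^ k = 1 := by
      rw [← pow_add]
      apply orderOf_dvd_iff_pow_eq_one.mp
      rw [horder]
      have : (k + 1) * k + k = k * k + 2 * k := by ring
      rw [this]; exact hdvd
    rw [e1]
    exact eq_inv_of_mul_eq_one_left e2
  set H := Subgroup.zpowers (a ^ k) with hH
  -- H is normal
  have hmemnorm : ∀ g : G, g * a ^ k * g⁻¹ ∈ H → g⁻¹ * a ^ k * g ∈ H →
      g ∈ Subgroup.normalizer (H : Set G) := by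
    intro g h1 h2
    rw [Subgroup.mem_normalizer_iff]
    intro h
    constructor
    · rintro ⟨j, rfl⟩
      rw [show g * (a ^ k) ^ j * g⁻¹ = (g * a ^ k * g⁻¹) ^ j from (conj_zpow).symm]
      exact Subgroup.zpow_mem _ h1 j
    · intro hh
      obtain ⟨j, hj⟩ := Subgroup.mem_zpowers_iff.mp hh
      have hx : h = g⁻¹ * (g * h * g⁻¹) * g := by group
      have hcj : g⁻¹ * (a ^ k) ^ j * g = (g⁻¹ * a ^ k * g) ^ j := by
        rw [show g⁻¹ * a ^ k * g = g⁻¹ * a ^ k * g⁻¹⁻¹ by rw [inv_inv], conj_zpow, inv_inv]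
      rw [hx, ← hj, hcj]
      exact Subgroup.zpow_mem _ h2 j
  have hnormal : H.Normal := by
    rw [← Subgroup.normalizer_eq_top_iff, ← top_le_iff, ← hgen, Subgroup.closure_le]
    rw [Set.insert_subset_iff, Set.singleton_subset_iff]
    constructor
    · refine hmemnorm a ?_ ?_
      · have hc : a * a ^ k * a⁻¹ = a ^ k := by group
        rw [hc]; exact Subgroup.mem_zpowers _
      · have hc : a⁻¹ * a ^ k * a = a ^ k := by group
        rw [hc]; exact Subgroup.mem_zpowers _
    · refine hmemnorm t ?_ ?_
      · rw [hkey]; exact Subgroup.inv_mem _ (Subgroup.mem_zpowers _)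
      · rw [hkey']; exact Subgroup.inv_mem _ (Subgroup.mem_zpowers _)
  haveI := hnormal
  set f := QuotientGroup.mk' H with hf
  -- images of generators generate the quotient
  have hgenQ : Subgroup.closure ({f a, f t} : Set (G ⧸ H)) = ⊤ := by
    have h1 : Subgroup.map f (Subgroup.closure {a, t}) = Subgroup.closure (f '' {a, t}) :=
      f.map_closure _
    rw [hgen, Subgroup.map_top_of_surjective f (QuotientGroup.mk'_surjective H),
      Set.image_pair] at h1
    exact h1.symm
  -- images of generators commute
  have hab : Commute (f a) (f t) := by
    show f a * f t = f t * f a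
    rw [← map_mul, ← map_mul]
    simp only [hf, QuotientGroup.mk'_apply]
    rw [QuotientGroup.eq]
    have e1 : (a * t)⁻¹ * (t * a) = (a ^ k)⁻¹ := by
      have : (a * t)⁻¹ * (t * a) = (t⁻¹ * a * t)⁻¹ * a := by group
      rw [this, hconj, pow_succ']
      group
    rw [e1]
    exact Subgroup.inv_mem _ (Subgroup.mem_zpowers _)
  -- the quotient is commutative
  have hcent : ∀ x ∈ ({f a, f t} : Set (G ⧸ H)), ∀ y : G ⧸ H, Commute x y := by
    intro x hx y
    have hy : y ∈ Subgroup.closure ({f a, f t} : Set (G ⧸ H)) :=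
      hgenQ ▸ Subgroup.mem_top y
    induction hy using Subgroup.closure_induction with
    | mem z hz =>
      simp only [Set.mem_insert_iff, Set.mem_singleton_iff] at hx hz
      rcases hx with rfl | rfl <;> rcases hz with rfl | rfl
      · exact Commute.refl _
      · exact hab
      · exact hab.symm
      · exact Commute.refl _
    | one => exact Commute.one_right x
    | mul u v _ _ hu hv => exact hu.mul_right hv
    | inv u _ hu => exact hu.inv_right
  have hcommQ : ∀ x y : G ⧸ H, x * y = y * x := by
    intro x y
    have hx : x ∈ Subgroup.closure ({f a, f t} : Set (G ⧸ H)) :=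
      hgenQ ▸ Subgroup.mem_top x
    induction hx using Subgroup.closure_induction with
    | mem z hz => exact hcent z hz y
    | one => exact (Commute.one_left y)
    | mul u v _ _ hu hv => exact (Commute.mul_left hu hv)
    | inv u _ hu => exact (Commute.inv_left hu)
  -- commutator is contained in H
  have hle : commutator G ≤ H := by
    rw [_root_.commutator_def, Subgroup.commutator_le]
    intro g _ h _
    have h1 : f ⁅g, h⁆ = 1 := by
      rw [commutatorElement_def]
      simp only [map_mul, map_inv]
      rw [hcommQ (f g) (f h)]
      group
    have h2 : ⁅g, h⁆ ∈ f.ker := MonoidHom.mem_ker.mpr h1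
    rwa [hf, QuotientGroup.ker_mk'] at h2
  -- H is contained in the commutator
  have hge : H ≤ commutator G := by
    rw [hH, Subgroup.zpowers_le]
    have e1 : (⁅a⁻¹, t⁻¹⁆ : G) = a ^ k := by
      rw [commutatorElement_def, inv_inv, inv_inv]
      have : a⁻¹ * t⁻¹ * a * t = a⁻¹ * (t⁻¹ * a * t) := by group
      rw [this, hconj, pow_succ', ← mul_assoc, inv_mul_cancel, one_mul]
    rw [← e1, _root_.commutator_def]
    exact Subgroup.commutator_mem_commutator (Subgroup.mem_top _) (Subgroup.mem_top _)
  have heq : commutator G = H := le_antisymm hle hge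
  refine ⟨heq, ?_⟩
  rw [heq, hH, Nat.card_zpowers, orderOf_pow, horder, Nat.gcd_comm]
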